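/- Let q ≥ 2 be a prime power, n ≥ 3 odd, m = (q^n+1)/(q+1), and let S ⊆ ℕ be the additive submonoid generated by q³, m·q, and q^n+1. Let x ∈ S with 0 < x ≤ (q−1)(q^n+1), and let j be the unique integer with (j−1)(q^n+1) < x ≤ j(q^n+1) (so 1 ≤ j ≤ q−1). Then min{ ν(y) : y ∈ S, y ≥ x } = j + 1, where ν(y) is the number of ordered pairs (a,b) ∈ S × S with a + b = y. -/

import Mathlib

private lemma memGen {g1 g2 g3 : ℕ} {S : AddSubmonoid ℕ}
    (hS : S = AddSubmonoid.closure {g1, g2, g3}) (a b c : ℕ) :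
    a * g1 + b * g2 + c * g3 ∈ S := by
  subst hS
  have h1 : g1 ∈ AddSubmonoid.closure {g1, g2, g3} :=
    AddSubmonoid.subset_closure (by simp)
  have h2 : g2 ∈ AddSubmonoid.closure {g1, g2, g3} :=
    AddSubmonoid.subset_closure (by simp)
  have h3 : g3 ∈ AddSubmonoid.closure {g1, g2, g3} :=
    AddSubmonoid.subset_closure (by simp)
  exact add_mem (add_mem (by simpa [nsmul_eq_mul] using AddSubmonoid.nsmul_mem _ h1 a)
    (by simpa [nsmul_eq_mul] using AddSubmonoid.nsmul_mem _ h2 b))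
    (by simpa [nsmul_eq_mul] using AddSubmonoid.nsmul_mem _ h3 c)

private lemma nu_lower {g1 g2 g3 : ℕ} (h1 : 0 < g1) (h2 : 0 < g2) (h3 : 0 < g3)
    {S : AddSubmonoid ℕ} (hS : S = AddSubmonoid.closure {g1, g2, g3})
    {y j α β γ : ℕ} (hy : y = α * g1 + β * g2 + γ * g3) (hT : j ≤ α + β + γ) :
    j + 1 ≤ {p : ℕ × ℕ | p.1 ∈ S ∧ p.2 ∈ S ∧ p.1 + p.2 = y}.ncard := by
  set s : ℕ → ℕ := fun i => min i α * g1 + min (i - α) β * g2 + min (i - α - β) γ * g3 with hs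
  -- step lemma
  have step : ∀ i, i < α + β + γ → s i < s (i + 1) := by
    intro i hi
    rcases lt_or_ge i α with h | h
    · have e1 : min i α = i := by omega
      have e2 : min (i + 1) α = i + 1 := by omega
      have e3 : i - α = 0 := by omega
      have e4 : i + 1 - α = 0 := by omega
      simp only [hs, e1, e2, e3, e4]
      have : (i + 1) * g1 = i * g1 + g1 := by ring
      omega
    rcases lt_or_ge i (α + β) with h' | h'
    · have e1 : min i α = α := by omega
      have e2 : min (i + 1) α = α := by omega
      have e3 : min (i - α) β = i - α := by omega
      have e4 : min (i + 1 - α) β = (i - α) + 1 := by omega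
      have e5 : i - α - β = 0 := by omega
      have e6 : i + 1 - α - β = 0 := by omega
      simp only [hs, e1, e2, e3, e4, e5, e6]
      have : ((i - α) + 1) * g2 = (i - α) * g2 + g2 := by ring
      omega
    · have e1 : min i α = α := by omega
      have e2 : min (i + 1) α = α := by omega
      have e3 : min (i - α) β = β := by omega
      have e4 : min (i + 1 - α) β = β := by omega
      have e5 : min (i - α - β) γ = i - α - β := by omega
      have e6 : min (i + 1 - α - β) γ = (i - α - β) + 1 := by omega
      simp only [hs, e1, e2, e3, e4, e5, e6]
      have : ((i - α - β) + 1) * g3 = (i - α - β) * g3 + g3 := by ring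
      omega
  have mono : ∀ i k, i < k → k ≤ α + β + γ → s i < s k := by
    intro i k hik hk
    induction k with
    | zero => omega
    | succ k ih =>
      rcases Nat.lt_or_ge i k with h | h
      · exact lt_trans (ih h (by omega)) (step k (by omega))
      · have : i = k := by omega
        subst this
        exact step i (by omega)
  set f : ℕ → ℕ × ℕ := fun i =>
    (s i, (α - min i α) * g1 + (β - min (i - α) β) * g2 + (γ - min (i - α - β) γ) * g3) with hf
  have hmemf : ∀ i, f i ∈ {p : ℕ × ℕ | p.1 ∈ S ∧ p.2 ∈ S ∧ p.1 + p.2 = y} := by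
    intro i
    refine ⟨memGen hS _ _ _, memGen hS _ _ _, ?_⟩
    show s i + _ = y
    simp only [hs, hy]
    have a1 : min i α + (α - min i α) = α := by omega
    have a2 : min (i - α) β + (β - min (i - α) β) = β := by omega
    have a3 : min (i - α - β) γ + (γ - min (i - α - β) γ) = γ := by omega
    calc min i α * g1 + min (i - α) β * g2 + min (i - α - β) γ * g3 +
        ((α - min i α) * g1 + (β - min (i - α) β) * g2 + (γ - min (i - α - β) γ) * g3)
        = (min i α + (α - min i α)) * g1 + (min (i - α) β + (β - min (i - α) β)) * g2 +
          (min (i - α - β) γ + (γ - min (i - α - β) γ)) * g3 := by ring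
      _ = α * g1 + β * g2 + γ * g3 := by rw [a1, a2, a3]
  have hsub : f '' Set.Iic j ⊆ {p : ℕ × ℕ | p.1 ∈ S ∧ p.2 ∈ S ∧ p.1 + p.2 = y} := by
    rintro p ⟨i, _, rfl⟩; exact hmemf i
  have hfin : {p : ℕ × ℕ | p.1 ∈ S ∧ p.2 ∈ S ∧ p.1 + p.2 = y}.Finite := by
    apply Set.Finite.subset ((Set.finite_Iic y).prod (Set.finite_Iic y))
    rintro ⟨a, b⟩ ⟨-, -, hab⟩
    exact ⟨by simp; omega, by simp; omega⟩
  have hinj : Set.InjOn f (Set.Iic j) := by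
    intro i hi k hk hik
    by_contra hne
    rcases Nat.lt_or_ge i k with h | h
    · have := mono i k h (by simp at hk; omega)
      have : s i ≠ s k := Nat.ne_of_lt this
      exact this (congrArg Prod.fst hik)
    · have hlt : k < i := by omega
      have := mono k i hlt (by simp at hi; omega)
      exact (Nat.ne_of_lt this).symm (congrArg Prod.fst hik)
  calc j + 1 = (Set.Iic j).ncard := by
        rw [show (Set.Iic j) = ↑(Finset.Iic j) by ext; simp, Set.ncard_coe_finset,
          Nat.card_Iic]
    _ = (f '' Set.Iic j).ncard := (Set.ncard_image_of_injOn hinj).symm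
    _ ≤ _ := Set.ncard_le_ncard hsub hfin

private lemma repGen' {g1 g2 g3 : ℕ} {S : AddSubmonoid ℕ}
    (hS : S = AddSubmonoid.closure {g1, g2, g3}) {y : ℕ} (hy : y ∈ S) :
    ∃ a b c, y = a * g1 + b * g2 + c * g3 := by
  subst hS
  induction hy using AddSubmonoid.closure_induction with
  | mem z hz =>
    simp only [Set.mem_insert_iff, Set.mem_singleton_iff] at hz
    rcases hz with h | h | h
    · exact ⟨1, 0, 0, by simp [h]⟩
    · exact ⟨0, 1, 0, by simp [h]⟩
    · exact ⟨0, 0, 1, by simp [h]⟩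
  | zero => exact ⟨0, 0, 0, by simp⟩
  | add u v _ _ hu hv =>
    obtain ⟨a, b, c, rfl⟩ := hu
    obtain ⟨a', b', c', rfl⟩ := hv
    exact ⟨a + a', b + b', c + c', by ring⟩

private lemma nu_upper (q n m j : ℕ) (hq2 : 2 ≤ q) (hn : 3 ≤ n)
    (hm : m * (q + 1) = q ^ n + 1) (hj : j < q)
    {S : AddSubmonoid ℕ} (hS : S = AddSubmonoid.closure {q ^ 3, m * q, q ^ n + 1}) :
    {p : ℕ × ℕ | p.1 ∈ S ∧ p.2 ∈ S ∧ p.1 + p.2 = j * (q ^ n + 1)}.ncard = j + 1 := by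
  set N := q ^ n + 1 with hN
  have hNpos : 0 < N := by positivity
  have key : ∀ a b : ℕ, a ∈ S → b ∈ S → a + b = j * N → ∃ i ≤ j, a = i * N ∧ b = (j - i) * N := by
    intro a b ha hb hab
    obtain ⟨α, β, γ, rfl⟩ := repGen' hS ha
    obtain ⟨α', β', γ', rfl⟩ := repGen' hS hb
    have E : (α + α') * q ^ 3 + (β + β') * (m * q) + (γ + γ') * N = j * N := by
      rw [← hab]; ring
    set A := α + α'; set B := β + β'; set C := γ + γ'
    have hAB : A = 0 ∧ B = 0 ∧ C = j := by
      rcases Nat.lt_or_ge C j with hC | hC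
      · -- C < j : contradiction via divisibility
        exfalso
        set k := j - C with hk
        have hk1 : 1 ≤ k := by omega
        have hkq : k < q := by omega
        have hjN : j * N = k * N + C * N := by
          rw [show j = k + C by omega]; ring
        have E2 : A * q ^ 3 + B * (m * q) = k * N := by omega
        have hdvd : q ∣ A * q ^ 3 + B * (m * q) := by
          refine dvd_add (Dvd.dvd.mul_left ?_ A) (Dvd.dvd.mul_left (dvd_mul_left q m) B)
          exact dvd_pow_self q (by norm_num)
        rw [E2] at hdvd
        have hkN : k * N = k * q ^ n + k := by rw [hN]; ring
        have hdq : q ∣ k * q ^ n := Dvd.dvd.mul_left (dvd_pow_self q (by omega)) k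
        have : q ∣ k := (Nat.dvd_add_right hdq).mp (by rwa [hkN] at hdvd)
        have := Nat.le_of_dvd (by omega) this
        omega
      · have hCle : C ≤ j := by
          by_contra hCgt
          have : j * N < C * N := by
            apply Nat.mul_lt_mul_of_lt_of_le (by omega) le_rfl hNpos
          omega
        have hCj : C = j := le_antisymm hCle hC
        subst hCj
        have hz : A * q ^ 3 + B * (m * q) = 0 := by omega
        have hmpos : 0 < m := by
          rcases Nat.eq_zero_or_pos m with h | h
          · rw [h] at hm; omega
          · exact h
        have hA0 : A * q ^ 3 = 0 := by omega
        have hB0 : B * (m * q) = 0 := by omega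
        have hq3 : q ^ 3 ≠ 0 := by positivity
        have hmq : m * q ≠ 0 := by positivity
        exact ⟨by rcases Nat.mul_eq_zero.mp hA0 with h | h; exact h; exact absurd h hq3,
          by rcases Nat.mul_eq_zero.mp hB0 with h | h; exact h; exact absurd h hmq, rfl⟩
    obtain ⟨hA, hB, hC⟩ := hAB
    have hα : α = 0 := by omega
    have hβ : β = 0 := by omega
    have hα' : α' = 0 := by omega
    have hβ' : β' = 0 := by omega
    refine ⟨γ, by omega, by simp [hα, hβ], by simp [hα', hβ']; omega⟩
  have heq : {p : ℕ × ℕ | p.1 ∈ S ∧ p.2 ∈ S ∧ p.1 + p.2 = j * N} =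
      (fun i => (i * N, (j - i) * N)) '' Set.Iic j := by
    ext ⟨a, b⟩
    constructor
    · rintro ⟨ha, hb, hab⟩
      obtain ⟨i, hij, rfl, rfl⟩ := key a b ha hb hab
      exact ⟨i, hij, rfl⟩
    · rintro ⟨i, hij, heq⟩
      simp only [Prod.mk.injEq] at heq
      obtain ⟨rfl, rfl⟩ := heq
      refine ⟨by simpa using memGen hS 0 0 i, by simpa using memGen hS 0 0 (j - i), ?_⟩
      simp only [Set.mem_Iic] at hij
      rw [← Nat.add_mul]
      congr 1
      omega
  rw [heq, Set.ncard_image_of_injOn, show (Set.Iic j) = ↑(Finset.Iic j) by ext; simp,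
    Set.ncard_coe_finset, Nat.card_Iic]
  intro i _ k _ hik
  simp only [Prod.mk.injEq] at hik
  exact Nat.eq_of_mul_eq_mul_right hNpos hik.1


theorem stmt_16 (q n m : ℕ) (hq : IsPrimePow q) (hq2 : 2 ≤ q) (hn : 3 ≤ n)
    (hodd : Odd n) (hm : m * (q + 1) = q ^ n + 1)
    (S : AddSubmonoid ℕ)
    (hS : S = AddSubmonoid.closure {q ^ 3, m * q, q ^ n + 1})
    (ν : ℕ → ℕ)
    (hν : ∀ x, ν x = {p : ℕ × ℕ | p.1 ∈ S ∧ p.2 ∈ S ∧ p.1 + p.2 = x}.ncard)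
    (x j : ℕ) (hx : x ∈ S) (hx0 : 0 < x) (hxu : x ≤ (q - 1) * (q ^ n + 1))
    (hj1 : (j - 1) * (q ^ n + 1) < x) (hj2 : x ≤ j * (q ^ n + 1)) :
    sInf (ν '' {y : ℕ | y ∈ S ∧ x ≤ y}) = j + 1 := by
  have hNpos : 0 < q ^ n + 1 := by positivity
  have hmpos : 0 < m := by
    rcases Nat.eq_zero_or_pos m with h | h
    · rw [h] at hm; omega
    · exact h
  have hg1 : 0 < q ^ 3 := by positivity
  have hg2 : 0 < m * q := by positivity
  have hj0 : 1 ≤ j := by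
    rcases Nat.eq_zero_or_pos j with h | h
    · rw [h] at hj2; omega
    · exact h
  have hjq : j < q := by
    have h1 : (j - 1) * (q ^ n + 1) < (q - 1) * (q ^ n + 1) := lt_of_lt_of_le hj1 hxu
    have : j - 1 < q - 1 := Nat.lt_of_mul_lt_mul_right h1
    omega
  -- generator bounds
  have hb1 : q ^ 3 ≤ q ^ n + 1 :=
    le_trans (Nat.pow_le_pow_right (by omega) hn) (Nat.le_succ _)
  have hb2 : m * q ≤ q ^ n + 1 := by
    rw [← hm]; exact Nat.mul_le_mul_left m (by omega)
  -- lower bound for every y in the set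
  have hlow : ∀ y, y ∈ S → x ≤ y → j + 1 ≤ ν y := by
    intro y hyS hxy
    obtain ⟨α, β, γ, rfl⟩ := repGen' hS hyS
    have hyN : α * q ^ 3 + β * (m * q) + γ * (q ^ n + 1) ≤ (α + β + γ) * (q ^ n + 1) := by
      calc α * q ^ 3 + β * (m * q) + γ * (q ^ n + 1)
          ≤ α * (q ^ n + 1) + β * (q ^ n + 1) + γ * (q ^ n + 1) :=
            Nat.add_le_add (Nat.add_le_add (Nat.mul_le_mul_left α hb1)
              (Nat.mul_le_mul_left β hb2)) le_rfl
        _ = (α + β + γ) * (q ^ n + 1) := by ring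
    have hT : j ≤ α + β + γ := by
      by_contra hlt
      have h1 : α + β + γ ≤ j - 1 := by omega
      have h2 : (α + β + γ) * (q ^ n + 1) ≤ (j - 1) * (q ^ n + 1) :=
        Nat.mul_le_mul_right _ h1
      have := lt_of_le_of_lt (le_trans (le_trans hxy hyN) h2) hj1
      exact lt_irrefl _ this
    rw [hν]
    exact nu_lower hg1 hg2 hNpos hS rfl hT
  have hjmem : j * (q ^ n + 1) ∈ S := by simpa using memGen hS 0 0 j
  have hmem : j + 1 ∈ ν '' {y : ℕ | y ∈ S ∧ x ≤ y} := by
    refine ⟨j * (q ^ n + 1), ⟨hjmem, hj2⟩, ?_⟩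
    rw [hν]
    exact nu_upper q n m j hq2 hn hm hjq hS
  refine le_antisymm (Nat.sInf_le hmem) (le_csInf ⟨_, hmem⟩ ?_)
  rintro z ⟨y, ⟨hyS, hxy⟩, rfl⟩
  exact hlow y hyS hxy
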